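/- arXiv:2102.09446 — 6 statements merged into one kernel-verified Lean document; each statement's English description precedes it below -/
import Mathlib

section
/- Let F be a k×p real matrix of rank p, let Σ_γ be a non-negative definite p×p matrix, let Σ_ε be a positive definite k×k matrix, and set V = F Σ_γ Fᵀ + Σ_ε and M = Fᵀ V⁻¹ F. Then M is invertible and M⁻¹ = (Fᵀ Σ_ε⁻¹ F)⁻¹ + Σ_γ. -/
open Matrix

/-- If `F` has rank `p`, then `F.mulVec` is injective. -/
lemma aux_mulVec_injective {k p : ℕ} (F : Matrix (Fin k) (Fin p) ℝ) (hF : F.rank = p) :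
    Function.Injective F.mulVec := by
  have hker : LinearMap.ker F.mulVecLin = ⊥ := by
    have h := F.mulVecLin.finrank_range_add_finrank_ker
    rw [Matrix.rank] at hF
    rw [hF] at h
    simp only [Module.finrank_pi, Fintype.card_fin] at h
    have h0 : Module.finrank ℝ (LinearMap.ker F.mulVecLin) = 0 := by omega
    exact Submodule.finrank_eq_zero.mp h0
  intro x y hxy
  have : F.mulVecLin x = F.mulVecLin y := hxy
  exact (LinearMap.ker_eq_bot.mp hker) this

/-- `Fᵀ * S⁻¹ * F` is positive definite when `S` is positive definite and `F` injective. -/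
lemma aux_posdef_conj {k p : ℕ} (F : Matrix (Fin k) (Fin p) ℝ)
    (hinj : Function.Injective F.mulVec)
    (S : Matrix (Fin k) (Fin k) ℝ) (hS : S.PosDef) :
    (Fᵀ * S * F).PosDef := by
  have hFt : Fᵀ = Fᴴ := (F.conjTranspose_eq_transpose_of_trivial).symm
  refine Matrix.PosDef.of_dotProduct_mulVec_pos ?_ ?_
  · rw [hFt]
    exact Matrix.isHermitian_conjTranspose_mul_mul F hS.isHermitian
  · intro x hx
    have hFx : F *ᵥ x ≠ 0 := by
      intro h
      exact hx (hinj (h.trans (F.mulVec_zero).symm))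
    have := hS.dotProduct_mulVec_pos hFx
    simpa only [star_trivial, ← Matrix.mulVec_mulVec, Matrix.dotProduct_mulVec,
      Matrix.vecMul_transpose] using this

/-- **Lemma (Appendix).** If `F` is a `k × p` real matrix of rank `p`, `Σγ` is non-negative
definite, `Σε` is positive definite, `V = F Σγ Fᵀ + Σε` and `M = Fᵀ V⁻¹ F`, then `M` is
invertible and `M⁻¹ = (Fᵀ Σε⁻¹ F)⁻¹ + Σγ`. -/
theorem stmt0 {k p : ℕ} (F : Matrix (Fin k) (Fin p) ℝ) (hF : F.rank = p)
    (Sγ : Matrix (Fin p) (Fin p) ℝ) (hSγ : Sγ.PosSemidef)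
    (Sε : Matrix (Fin k) (Fin k) ℝ) (hSε : Sε.PosDef)
    (V : Matrix (Fin k) (Fin k) ℝ) (hV : V = F * Sγ * Fᵀ + Sε)
    (M : Matrix (Fin p) (Fin p) ℝ) (hM : M = Fᵀ * V⁻¹ * F) :
    IsUnit M.det ∧ M⁻¹ = (Fᵀ * Sε⁻¹ * F)⁻¹ + Sγ := by
  have hinj := aux_mulVec_injective F hF
  -- V is positive definite
  have hVpsd : (F * Sγ * Fᵀ).PosSemidef := by
    have := hSγ.mul_mul_conjTranspose_same F
    rwa [Matrix.conjTranspose_eq_transpose_of_trivial] at this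
  have hVpd : V.PosDef := hV ▸ Matrix.PosDef.posSemidef_add hVpsd hSε
  have hVdet : IsUnit V.det := isUnit_iff_ne_zero.mpr (ne_of_gt hVpd.det_pos)
  have hSεdet : IsUnit Sε.det := isUnit_iff_ne_zero.mpr (ne_of_gt hSε.det_pos)
  set A := Fᵀ * Sε⁻¹ * F with hA
  have hApd : A.PosDef := aux_posdef_conj F hinj Sε⁻¹ hSε.inv
  have hAdet : IsUnit A.det := isUnit_iff_ne_zero.mpr (ne_of_gt hApd.det_pos)
  -- key algebraic identity
  have hFS : F * Sγ * Fᵀ = V - Sε := by rw [hV]; abel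
  have h1 : M * (A⁻¹ + Sγ) * A = A := by
    rw [Matrix.mul_assoc, add_mul, Matrix.nonsing_inv_mul A hAdet, mul_add, mul_one, hM, hA]
    have e1 : Fᵀ * V⁻¹ * F * (Sγ * (Fᵀ * Sε⁻¹ * F)) =
        Fᵀ * V⁻¹ * (F * Sγ * Fᵀ) * (Sε⁻¹ * F) := by
      simp only [Matrix.mul_assoc]
    rw [e1, hFS, Matrix.mul_sub, Matrix.sub_mul]
    have e2 : Fᵀ * V⁻¹ * V * (Sε⁻¹ * F) = Fᵀ * Sε⁻¹ * F := by
      rw [Matrix.mul_assoc Fᵀ V⁻¹ V, Matrix.nonsing_inv_mul V hVdet, Matrix.mul_one,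
        Matrix.mul_assoc]
    have e3 : Fᵀ * V⁻¹ * Sε * (Sε⁻¹ * F) = Fᵀ * V⁻¹ * F := by
      rw [Matrix.mul_assoc (Fᵀ * V⁻¹) Sε (Sε⁻¹ * F), ← Matrix.mul_assoc Sε Sε⁻¹ F,
        Matrix.mul_nonsing_inv Sε hSεdet, Matrix.one_mul]
    rw [e2, e3]
    abel
  have hMW : M * (A⁻¹ + Sγ) = 1 := by
    have := congrArg (fun X => X * A⁻¹) h1
    simpa only [Matrix.mul_assoc, Matrix.mul_nonsing_inv A hAdet, Matrix.mul_one] using this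
  have hMdet : IsUnit M.det := by
    have := congrArg Matrix.det hMW
    rw [Matrix.det_mul, Matrix.det_one] at this
    exact IsUnit.of_mul_eq_one _ this
  exact ⟨hMdet, Matrix.inv_eq_right_inv hMW⟩
end

section
/- Let F₂ be a k×p₂ real matrix of rank p₂, Σ_γ a non-negative definite p₂×p₂ matrix, σ_ε > 0, and V = F₂ Σ_γ F₂ᵀ + σ_ε² I_k. Then V F₂ = F₂ (Σ_γ F₂ᵀ F₂ + σ_ε² I_{p₂}), and consequently the generalized least squares estimator matrix coincides with the ordinary least squares estimator matrix: (F₂ᵀ V⁻¹ F₂)⁻¹ F₂ᵀ V⁻¹ = (F₂ᵀ F₂)⁻¹ F₂ᵀ. -/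
open Matrix

private lemma posDef_smul' {n : ℕ} {c : ℝ} (hc : 0 < c) {A : Matrix (Fin n) (Fin n) ℝ}
    (hA : A.PosDef) : (c • A).PosDef := by
  have hherm : (c • A).IsHermitian := by
    unfold Matrix.IsHermitian
    rw [conjTranspose_smul, hA.1.eq]
    simp
  refine Matrix.PosDef.of_dotProduct_mulVec_pos hherm fun x hx => ?_
  have := hA.dotProduct_mulVec_pos hx
  simp only [smul_mulVec, dotProduct_smul, smul_eq_mul]
  positivity

private lemma posDef_transpose_mul_self {k p : ℕ} (F : Matrix (Fin k) (Fin p) ℝ)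
    (hinj : Function.Injective F.mulVec) : (Fᵀ * F).PosDef := by
  refine Matrix.PosDef.of_dotProduct_mulVec_pos ?_ ?_
  · rw [← conjTranspose_eq_transpose_of_trivial]
    exact isHermitian_conjTranspose_mul_self F
  · intro x hx
    have hFx : F *ᵥ x ≠ 0 := by
      intro h
      exact hx (hinj (h.trans (F.mulVec_zero).symm))
    have hkey : star x ⬝ᵥ (Fᵀ * F) *ᵥ x = (F *ᵥ x) ⬝ᵥ (F *ᵥ x) := by
      rw [← mulVec_mulVec, dotProduct_mulVec]
      congr 1
      · simp [vecMul_transpose]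
    rw [hkey]
    rcases lt_or_eq_of_le (Finset.sum_nonneg fun i _ => mul_self_nonneg ((F *ᵥ x) i)) with h | h
    · exact h
    · exact absurd (dotProduct_self_eq_zero.mp h.symm) hFx

/-- With `V = F₂ Σγ F₂ᵀ + σε² I` one has `V F₂ = F₂ (Σγ F₂ᵀ F₂ + σε² I)`, and consequently
the generalized least squares estimator matrix coincides with the ordinary least squares
estimator matrix: `(F₂ᵀ V⁻¹ F₂)⁻¹ F₂ᵀ V⁻¹ = (F₂ᵀ F₂)⁻¹ F₂ᵀ`. -/
theorem stmt4 {k p₂ : ℕ} (F₂ : Matrix (Fin k) (Fin p₂) ℝ) (hF₂ : F₂.rank = p₂)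
    (Sγ : Matrix (Fin p₂) (Fin p₂) ℝ) (hSγ : Sγ.PosSemidef)
    (σε : ℝ) (hσε : 0 < σε)
    (V : Matrix (Fin k) (Fin k) ℝ) (hV : V = F₂ * Sγ * F₂ᵀ + σε ^ 2 • 1) :
    V * F₂ = F₂ * (Sγ * (F₂ᵀ * F₂) + σε ^ 2 • 1) ∧
      (F₂ᵀ * V⁻¹ * F₂)⁻¹ * F₂ᵀ * V⁻¹ = (F₂ᵀ * F₂)⁻¹ * F₂ᵀ := by
  have hσ2 : (0:ℝ) < σε ^ 2 := by positivity
  -- injectivity of mulVec F₂ from full column rank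
  have hinj : Function.Injective F₂.mulVec := by
    have h1 : LinearMap.ker F₂.mulVecLin = ⊥ := by
      have h2 := F₂.mulVecLin.finrank_range_add_finrank_ker
      rw [Matrix.rank] at hF₂
      rw [hF₂, Module.finrank_fin_fun] at h2
      have : Module.finrank ℝ (LinearMap.ker F₂.mulVecLin) = 0 := by omega
      exact Submodule.finrank_eq_zero.mp this
    intro x y hxy
    have := LinearMap.ker_eq_bot.mp h1
    exact this hxy
  set G : Matrix (Fin p₂) (Fin p₂) ℝ := F₂ᵀ * F₂ with hG
  have hGpd : G.PosDef := posDef_transpose_mul_self F₂ hinj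
  have hGdet : IsUnit G.det := isUnit_iff_isUnit_det G |>.mp hGpd.isUnit
  -- V is positive definite
  have hVpd : V.PosDef := by
    rw [hV]
    have h1 : (F₂ * Sγ * F₂ᵀ).PosSemidef := by
      have := hSγ.mul_mul_conjTranspose_same F₂
      rwa [conjTranspose_eq_transpose_of_trivial] at this
    have h2 : ((σε ^ 2 : ℝ) • (1 : Matrix (Fin k) (Fin k) ℝ)).PosDef :=
      posDef_smul' hσ2 Matrix.PosDef.one
    exact Matrix.PosDef.posSemidef_add h1 h2
  have hVdet : IsUnit V.det := isUnit_iff_isUnit_det V |>.mp hVpd.isUnit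
  set M : Matrix (Fin p₂) (Fin p₂) ℝ := Sγ * G + σε ^ 2 • 1 with hM
  -- first claim
  have part1 : V * F₂ = F₂ * M := by
    rw [hV, hM, hG]
    simp only [Matrix.add_mul, Matrix.mul_add, Matrix.smul_mul, Matrix.mul_smul,
      Matrix.one_mul, Matrix.mul_one, Matrix.mul_assoc]
  -- M is invertible: G * M is positive definite
  have hGM : (G * M).PosDef := by
    have hexp : G * M = G * Sγ * Gᵀ + σε ^ 2 • G := by
      rw [hM]
      have hGT : Gᵀ = G := by
        rw [← conjTranspose_eq_transpose_of_trivial]; exact hGpd.isHermitian.eq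
      rw [hGT]
      simp only [Matrix.mul_add, Matrix.mul_smul, Matrix.mul_one, Matrix.mul_assoc]
    rw [hexp]
    have h1 : (G * Sγ * Gᵀ).PosSemidef := by
      have := hSγ.mul_mul_conjTranspose_same G
      rwa [conjTranspose_eq_transpose_of_trivial] at this
    exact Matrix.PosDef.posSemidef_add h1 (posDef_smul' hσ2 hGpd)
  have hMdet : IsUnit M.det := by
    have hMu : IsUnit M := by
      have hMeq : M = G⁻¹ * (G * M) := by
        rw [← Matrix.mul_assoc, Matrix.nonsing_inv_mul G hGdet, Matrix.one_mul]
      rw [hMeq]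
      exact (Matrix.isUnit_nonsing_inv_iff.mpr hGpd.isUnit).mul hGM.isUnit
    exact (isUnit_iff_isUnit_det M).mp hMu
  have hMTdet : IsUnit Mᵀ.det := by rwa [Matrix.det_transpose]
  -- V⁻¹ F₂ = F₂ M⁻¹
  have key : V⁻¹ * F₂ = F₂ * M⁻¹ := by
    have h1 : V⁻¹ * (V * F₂) * M⁻¹ = V⁻¹ * (F₂ * M) * M⁻¹ := by rw [part1]
    rw [← Matrix.mul_assoc, Matrix.nonsing_inv_mul V hVdet, Matrix.one_mul,
      Matrix.mul_assoc, Matrix.mul_assoc, Matrix.mul_nonsing_inv M hMdet,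
      Matrix.mul_one] at h1
    exact h1.symm
  -- F₂ᵀ V⁻¹ = (Mᵀ)⁻¹ F₂ᵀ
  have hVsymm : V⁻¹ᵀ = V⁻¹ := by
    rw [Matrix.transpose_nonsing_inv]
    congr 1
    rw [← conjTranspose_eq_transpose_of_trivial]
    exact hVpd.isHermitian.eq
  have key2 : F₂ᵀ * V⁻¹ = (Mᵀ)⁻¹ * F₂ᵀ := by
    have := congrArg Matrix.transpose key
    rwa [Matrix.transpose_mul, Matrix.transpose_mul, hVsymm, Matrix.transpose_nonsing_inv]
      at this
  refine ⟨part1, ?_⟩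
  rw [Matrix.mul_assoc, key2, ← Matrix.mul_assoc, Matrix.mul_assoc Mᵀ⁻¹,
    Matrix.mul_inv_rev, Matrix.nonsing_inv_nonsing_inv _ hMTdet,
    Matrix.mul_assoc (F₂ᵀ * F₂)⁻¹ Mᵀ Mᵀ⁻¹, Matrix.mul_nonsing_inv _ hMTdet, Matrix.mul_one]
end

section
/- Let σ₁ > 0, σ₂ > 0, 0 ≤ ρ ≤ 1, δ₂ > 0 and δ₁ < y₀, and define h(t) = (δ₂ t + δ₁ − y₀)/√(σ₁² + 2ρσ₁σ₂ t + σ₂² t²) for t ≥ 0. Then for every real z with −(y₀ − δ₁)/σ₁ < z < δ₂/σ₂ there exists exactly one t > 0 with h(t) = z; i.e. every α-quantile t_α of the failure time distribution with z_α in this range is a non-degenerate, uniquely determined positive solution of h(t_α) = z_α. -/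
set_option maxHeartbeats 1000000 in
private lemma stmt8_aux (σ₁ σ₂ ρ δ₁ δ₂ y₀ z s t : ℝ) (h₁ : 0 < σ₁) (h₂ : 0 < σ₂)
    (hρ₀ : 0 ≤ ρ) (hδ₂ : 0 < δ₂) (hδ₁ : δ₁ < y₀) (hs : 0 < s) (ht : 0 < t)
    (hes : (δ₂ * s + δ₁ - y₀) / Real.sqrt (σ₁ ^ 2 + 2 * ρ * σ₁ * σ₂ * s + σ₂ ^ 2 * s ^ 2) = z)
    (het : (δ₂ * t + δ₁ - y₀) / Real.sqrt (σ₁ ^ 2 + 2 * ρ * σ₁ * σ₂ * t + σ₂ ^ 2 * t ^ 2) = z) :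
    s = t := by
  have hc0 : 0 < y₀ - δ₁ := by linarith
  have hQs : 0 < σ₁ ^ 2 + 2 * ρ * σ₁ * σ₂ * s + σ₂ ^ 2 * s ^ 2 := by
    have : 0 ≤ 2 * ρ * σ₁ * σ₂ * s := by positivity
    nlinarith [sq_nonneg (σ₂ * s)]
  have hQt : 0 < σ₁ ^ 2 + 2 * ρ * σ₁ * σ₂ * t + σ₂ ^ 2 * t ^ 2 := by
    have : 0 ≤ 2 * ρ * σ₁ * σ₂ * t := by positivity
    nlinarith [sq_nonneg (σ₂ * t)]
  set u := Real.sqrt (σ₁ ^ 2 + 2 * ρ * σ₁ * σ₂ * s + σ₂ ^ 2 * s ^ 2) with hu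
  set v := Real.sqrt (σ₁ ^ 2 + 2 * ρ * σ₁ * σ₂ * t + σ₂ ^ 2 * t ^ 2) with hv
  have hu0 : 0 < u := Real.sqrt_pos.mpr hQs
  have hv0 : 0 < v := Real.sqrt_pos.mpr hQt
  have hu2 : u ^ 2 = σ₁ ^ 2 + 2 * ρ * σ₁ * σ₂ * s + σ₂ ^ 2 * s ^ 2 := Real.sq_sqrt hQs.le
  have hv2 : v ^ 2 = σ₁ ^ 2 + 2 * ρ * σ₁ * σ₂ * t + σ₂ ^ 2 * t ^ 2 := Real.sq_sqrt hQt.le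
  rw [div_eq_iff (ne_of_gt hu0)] at hes
  rw [div_eq_iff (ne_of_gt hv0)] at het
  -- cross relation and its square
  have e : (δ₂ * s + δ₁ - y₀) * v = (δ₂ * t + δ₁ - y₀) * u := by
    rw [hes, het]; ring
  have esq : ((δ₂ * s + δ₁ - y₀) * v) ^ 2 = ((δ₂ * t + δ₁ - y₀) * u) ^ 2 := by rw [e]
  have esq' : (δ₂ * t + δ₁ - y₀) ^ 2 * (σ₁ ^ 2 + 2 * ρ * σ₁ * σ₂ * s + σ₂ ^ 2 * s ^ 2)
      - (δ₂ * s + δ₁ - y₀) ^ 2 * (σ₁ ^ 2 + 2 * ρ * σ₁ * σ₂ * t + σ₂ ^ 2 * t ^ 2) = 0 := by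
    rw [← hu2, ← hv2]; linear_combination -esq
  have hid : (δ₂ * t + δ₁ - y₀) ^ 2 * (σ₁ ^ 2 + 2 * ρ * σ₁ * σ₂ * s + σ₂ ^ 2 * s ^ 2)
      - (δ₂ * s + δ₁ - y₀) ^ 2 * (σ₁ ^ 2 + 2 * ρ * σ₁ * σ₂ * t + σ₂ ^ 2 * t ^ 2)
      = (t - s) * (σ₁ ^ 2 * δ₂ * ((δ₂ * s + δ₁ - y₀) + (δ₂ * t + δ₁ - y₀))
        + 2 * ρ * σ₁ * σ₂ * ((δ₂ * s + δ₁ - y₀) * (δ₂ * t + δ₁ - y₀)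
            + (y₀ - δ₁) * ((δ₂ * s + δ₁ - y₀) + (δ₂ * t + δ₁ - y₀)))
        + σ₂ ^ 2 * (y₀ - δ₁) * (s * (δ₂ * t + δ₁ - y₀) + t * (δ₂ * s + δ₁ - y₀))) := by
    ring
  set Br : ℝ := σ₁ ^ 2 * δ₂ * ((δ₂ * s + δ₁ - y₀) + (δ₂ * t + δ₁ - y₀))
        + 2 * ρ * σ₁ * σ₂ * ((δ₂ * s + δ₁ - y₀) * (δ₂ * t + δ₁ - y₀)
            + (y₀ - δ₁) * ((δ₂ * s + δ₁ - y₀) + (δ₂ * t + δ₁ - y₀)))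
        + σ₂ ^ 2 * (y₀ - δ₁) * (s * (δ₂ * t + δ₁ - y₀) + t * (δ₂ * s + δ₁ - y₀)) with hBrdef
  rcases lt_trichotomy z 0 with hzneg | hz0 | hzpos
  · -- z < 0 : both numerators negative, bracket negative
    have hA : δ₂ * s + δ₁ - y₀ < 0 := by
      rw [hes]; exact mul_neg_of_neg_of_pos hzneg hu0
    have hB : δ₂ * t + δ₁ - y₀ < 0 := by
      rw [het]; exact mul_neg_of_neg_of_pos hzneg hv0
    have hP : (δ₂ * s) * (δ₂ * t) < (y₀ - δ₁) * (y₀ - δ₁) :=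
      mul_lt_mul'' (by linarith) (by linarith) (by positivity) (by positivity)
    have hBr : Br < 0 := by
      rw [hBrdef]
      clear hid esq' esq e hu2 hv2 hes het hQs hQt
      have hmid : (δ₂ * s + δ₁ - y₀) * (δ₂ * t + δ₁ - y₀)
          + (y₀ - δ₁) * ((δ₂ * s + δ₁ - y₀) + (δ₂ * t + δ₁ - y₀)) < 0 := by nlinarith [hP]
      have hρ' : 0 ≤ 2 * ρ * σ₁ * σ₂ := by positivity
      have h3 : s * (δ₂ * t + δ₁ - y₀) + t * (δ₂ * s + δ₁ - y₀) < 0 := by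
        linarith [mul_neg_of_pos_of_neg hs hB, mul_neg_of_pos_of_neg ht hA]
      nlinarith [mul_nonpos_of_nonneg_of_nonpos hρ' hmid.le,
        mul_pos (mul_pos (pow_pos h₁ 2) hδ₂)
          (by linarith : (0:ℝ) < -((δ₂ * s + δ₁ - y₀) + (δ₂ * t + δ₁ - y₀))),
        mul_pos (mul_pos (pow_pos h₂ 2) hc0)
          (by linarith : (0:ℝ) < -(s * (δ₂ * t + δ₁ - y₀) + t * (δ₂ * s + δ₁ - y₀)))]
    have hts : (t - s) = 0 := by
      rcases mul_eq_zero.mp (by linarith [hid, esq'] : (t - s) * Br = 0) with h | h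
      · exact h
      · exact absurd h (ne_of_lt hBr)
    linarith
  · -- z = 0
    rw [hz0, zero_mul] at hes het
    have e1 : δ₂ * s + δ₁ - y₀ = 0 := hes
    have e2 : δ₂ * t + δ₁ - y₀ = 0 := het
    have : δ₂ * s = δ₂ * t := by linarith
    exact mul_left_cancel₀ (ne_of_gt hδ₂) this
  · -- z > 0 : both numerators positive, bracket positive
    have hA : 0 < δ₂ * s + δ₁ - y₀ := by
      rw [hes]; exact mul_pos hzpos hu0
    have hB : 0 < δ₂ * t + δ₁ - y₀ := by
      rw [het]; exact mul_pos hzpos hv0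
    have hBr : 0 < Br := by
      rw [hBrdef]
      clear hid esq' esq e hu2 hv2 hes het hQs hQt
      have hmid : 0 < (δ₂ * s + δ₁ - y₀) * (δ₂ * t + δ₁ - y₀)
          + (y₀ - δ₁) * ((δ₂ * s + δ₁ - y₀) + (δ₂ * t + δ₁ - y₀)) := by
        nlinarith [mul_pos hA hB,
          mul_pos hc0 (by linarith : (0:ℝ) < (δ₂ * s + δ₁ - y₀) + (δ₂ * t + δ₁ - y₀))]
      have hρ' : 0 ≤ 2 * ρ * σ₁ * σ₂ := by positivity
      have h3 : 0 < s * (δ₂ * t + δ₁ - y₀) + t * (δ₂ * s + δ₁ - y₀) := by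
        linarith [mul_pos hs hB, mul_pos ht hA]
      nlinarith [mul_nonneg hρ' hmid.le,
        mul_pos (mul_pos (pow_pos h₁ 2) hδ₂)
          (by linarith : (0:ℝ) < (δ₂ * s + δ₁ - y₀) + (δ₂ * t + δ₁ - y₀)),
        mul_pos (mul_pos (pow_pos h₂ 2) hc0) h3]
    have hts : (t - s) = 0 := by
      rcases mul_eq_zero.mp (by linarith [hid, esq'] : (t - s) * Br = 0) with h | h
      · exact h
      · exact absurd h (ne_of_gt hBr)
    linarith

/-- For `σ₁, σ₂ > 0`, `0 ≤ ρ ≤ 1`, `δ₂ > 0` and `δ₁ < y₀`, and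
`h(t) = (δ₂ t + δ₁ − y₀)/√(σ₁² + 2ρσ₁σ₂ t + σ₂² t²)`: for every `z` with
`−(y₀ − δ₁)/σ₁ < z < δ₂/σ₂` there exists exactly one `t > 0` with `h(t) = z`. -/
theorem stmt8 (σ₁ σ₂ ρ δ₁ δ₂ y₀ : ℝ) (h₁ : 0 < σ₁) (h₂ : 0 < σ₂)
    (hρ₀ : 0 ≤ ρ) (hρ₁ : ρ ≤ 1) (hδ₂ : 0 < δ₂) (hδ₁ : δ₁ < y₀)
    (z : ℝ) (hz₁ : -(y₀ - δ₁) / σ₁ < z) (hz₂ : z < δ₂ / σ₂) :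
    ∃! t : ℝ, 0 < t ∧
      (δ₂ * t + δ₁ - y₀) / Real.sqrt (σ₁ ^ 2 + 2 * ρ * σ₁ * σ₂ * t + σ₂ ^ 2 * t ^ 2) = z := by
  have hc0 : 0 < y₀ - δ₁ := by linarith
  have hQpos : ∀ t : ℝ, 0 ≤ t → 0 < σ₁ ^ 2 + 2 * ρ * σ₁ * σ₂ * t + σ₂ ^ 2 * t ^ 2 := by
    intro t htt
    have : 0 ≤ 2 * ρ * σ₁ * σ₂ * t := by positivity
    nlinarith [sq_nonneg (σ₂ * t)]
  have hzσ : 0 < δ₂ - z * σ₂ := by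
    have := (lt_div_iff₀ h₂).mp hz₂
    linarith
  set T : ℝ := max ((y₀ - δ₁) / δ₂) (((y₀ - δ₁) + z * σ₁) / (δ₂ - z * σ₂)) + 1 with hT
  have hT0 : 0 < T := by
    have h' : (0:ℝ) ≤ (y₀ - δ₁) / δ₂ := by positivity
    have := le_max_left ((y₀ - δ₁) / δ₂) (((y₀ - δ₁) + z * σ₁) / (δ₂ - z * σ₂))
    simp only [hT]; linarith
  have hTc : y₀ - δ₁ < δ₂ * T := by
    have h' : (y₀ - δ₁) / δ₂ ≤ T - 1 := by
      simp only [hT]; linarith [le_max_left ((y₀ - δ₁) / δ₂) (((y₀ - δ₁) + z * σ₁) / (δ₂ - z * σ₂))]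
    have := (div_le_iff₀ hδ₂).mp h'
    nlinarith
  have hTz : z * (σ₁ + σ₂ * T) < δ₂ * T + δ₁ - y₀ := by
    have h' : ((y₀ - δ₁) + z * σ₁) / (δ₂ - z * σ₂) ≤ T - 1 := by
      simp only [hT]; linarith [le_max_right ((y₀ - δ₁) / δ₂) (((y₀ - δ₁) + z * σ₁) / (δ₂ - z * σ₂))]
    have := (div_le_iff₀ hzσ).mp h'
    nlinarith
  have hcont : ContinuousOn
      (fun t : ℝ => (δ₂ * t + δ₁ - y₀) / Real.sqrt (σ₁ ^ 2 + 2 * ρ * σ₁ * σ₂ * t + σ₂ ^ 2 * t ^ 2))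
      (Set.Icc 0 T) := by
    apply ContinuousOn.div
    · fun_prop
    · fun_prop
    · intro x hx
      exact ne_of_gt (Real.sqrt_pos.mpr (hQpos x hx.1))
  have hf0 : (δ₂ * (0:ℝ) + δ₁ - y₀) / Real.sqrt (σ₁ ^ 2 + 2 * ρ * σ₁ * σ₂ * 0 + σ₂ ^ 2 * 0 ^ 2) < z := by
    have hs : Real.sqrt (σ₁ ^ 2 + 2 * ρ * σ₁ * σ₂ * 0 + σ₂ ^ 2 * 0 ^ 2) = σ₁ := by
      norm_num; exact Real.sqrt_sq h₁.le
    rw [hs]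
    have : -(y₀ - δ₁) / σ₁ = (δ₂ * 0 + δ₁ - y₀) / σ₁ := by ring_nf
    linarith [this ▸ hz₁]
  have hfT : z < (δ₂ * T + δ₁ - y₀) / Real.sqrt (σ₁ ^ 2 + 2 * ρ * σ₁ * σ₂ * T + σ₂ ^ 2 * T ^ 2) := by
    have hQT : 0 < σ₁ ^ 2 + 2 * ρ * σ₁ * σ₂ * T + σ₂ ^ 2 * T ^ 2 := hQpos T hT0.le
    have hsq : Real.sqrt (σ₁ ^ 2 + 2 * ρ * σ₁ * σ₂ * T + σ₂ ^ 2 * T ^ 2) ≤ σ₁ + σ₂ * T := by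
      rw [show σ₁ + σ₂ * T = Real.sqrt ((σ₁ + σ₂ * T) ^ 2) from
        (Real.sqrt_sq (by positivity)).symm]
      apply Real.sqrt_le_sqrt
      nlinarith [mul_nonneg (mul_nonneg h₁.le h₂.le) hT0.le]
    have hsq0 : 0 < Real.sqrt (σ₁ ^ 2 + 2 * ρ * σ₁ * σ₂ * T + σ₂ ^ 2 * T ^ 2) :=
      Real.sqrt_pos.mpr hQT
    have hnum : 0 < δ₂ * T + δ₁ - y₀ := by linarith
    have h1' : z < (δ₂ * T + δ₁ - y₀) / (σ₁ + σ₂ * T) := by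
      rw [lt_div_iff₀ (by positivity)]
      linarith
    have h2' : (δ₂ * T + δ₁ - y₀) / (σ₁ + σ₂ * T)
        ≤ (δ₂ * T + δ₁ - y₀) / Real.sqrt (σ₁ ^ 2 + 2 * ρ * σ₁ * σ₂ * T + σ₂ ^ 2 * T ^ 2) := by
      gcongr
    linarith
  obtain ⟨t, htmem, hteq⟩ := intermediate_value_Ioo hT0.le hcont ⟨hf0, hfT⟩
  refine ⟨t, ⟨htmem.1, hteq⟩, ?_⟩
  intro t' ⟨ht'0, ht'eq⟩
  exact stmt8_aux σ₁ σ₂ ρ δ₁ δ₂ y₀ z t' t h₁ h₂ hρ₀ hδ₂ hδ₁ ht'0 htmem.1 ht'eq hteq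
end

section
/- (Theorem 1.) Let g₁ : 𝒳 → ℝ^{p₁} and g₂ : 𝒯 → ℝ^{p₂} be regression functions and c₁ ∈ ℝ^{p₁}, c₂ ∈ ℝ^{p₂} nonzero vectors. Suppose ξ* is an approximate design on 𝒳 with invertible M₁(ξ*) minimizing c₁ᵀ M₁(ξ)⁻¹ c₁ over all approximate designs ξ on 𝒳 with invertible M₁(ξ), and τ* is an approximate design on 𝒯 with invertible M₂(τ*) minimizing c₂ᵀ M₂(τ)⁻¹ c₂ over all approximate designs τ on 𝒯 with invertible M₂(τ). Then the product design ζ* = ξ* ⊗ τ* minimizes (c₁ ⊗ c₂)ᵀ M(ζ)⁻¹ (c₁ ⊗ c₂) over all approximate designs ζ on 𝒳 × 𝒯 with invertible M(ζ), where M(ζ) = Σᵢ ηᵢ (g₁(xᵢ) ⊗ g₂(tᵢ))(g₁(xᵢ) ⊗ g₂(tᵢ))ᵀ, and the optimal value factorizes: (c₁ ⊗ c₂)ᵀ M(ζ*)⁻¹ (c₁ ⊗ c₂) = (c₁ᵀ M₁(ξ*)⁻¹ c₁)(c₂ᵀ M₂(τ*)⁻¹ c₂). In the destructive-testing model with one measurement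 per unit this says: if ξ* is c-optimal for extrapolation at the normal use condition x_u in the marginal model for the stress variables (g₁ = f₁, c₁ = f₁(x_u)) and τ* is c-optimal for extrapolation at t₀.₅ in the weighted marginal model for the time variable (g₂(t) = f₂(t)/σ(t), c₂ = f₂(t₀.₅)), then ζ* = ξ* ⊗ τ* is optimal for estimating the median failure time t₀.₅. -/
open Matrix

/-- The information matrix `M(ξ) = Σᵢ wᵢ g(sᵢ) g(sᵢ)ᵀ` of an approximate design given by
points `s : Fin m → S` and weights `w : Fin m → ℝ` for a regression function `g`. -/
noncomputable def infoMat {S : Type*} {ι κ : Type*} [Fintype ι]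
    (g : S → κ → ℝ) (pts : ι → S) (w : ι → ℝ) : Matrix κ κ ℝ :=
  ∑ i, w i • vecMulVec (g (pts i)) (g (pts i))

open Kronecker

section Aux
set_option linter.unusedSectionVars false
variable {κ : Type*} [Fintype κ] [DecidableEq κ]

lemma aux_vecMulVec_mulVec (a b v : κ → ℝ) : vecMulVec a b *ᵥ v = (b ⬝ᵥ v) • a := by
  ext i; simp only [vecMulVec_apply, mulVec, dotProduct, Pi.smul_apply, smul_eq_mul,
    Finset.sum_mul]
  exact Finset.sum_congr rfl fun j _ => by ring

lemma aux_mul_vecMulVec (M : Matrix κ κ ℝ) (a b : κ → ℝ) :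
    M * vecMulVec a b = vecMulVec (M *ᵥ a) b := by
  ext i j; simp only [mul_apply, vecMulVec_apply, mulVec, dotProduct, Finset.sum_mul]
  exact Finset.sum_congr rfl fun k _ => by ring

lemma aux_vecMulVec_mul (a b : κ → ℝ) (M : Matrix κ κ ℝ) :
    vecMulVec a b * M = vecMulVec a (b ᵥ* M) := by
  ext i j; simp only [mul_apply, vecMulVec_apply, vecMul, dotProduct, Finset.mul_sum]
  exact Finset.sum_congr rfl fun k _ => by ring

lemma aux_vecMulVec_mul_vecMulVec (a b c d : κ → ℝ) :
    vecMulVec a b * vecMulVec c d = (b ⬝ᵥ c) • vecMulVec a d := by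
  ext i j
  simp only [mul_apply, vecMulVec_apply, dotProduct, Matrix.smul_apply, smul_eq_mul, Finset.sum_mul]
  exact Finset.sum_congr rfl fun k _ => by ring

lemma aux_vecMulVec_posSemidef (a : κ → ℝ) : (vecMulVec a a).PosSemidef := by
  rw [posSemidef_iff_dotProduct_mulVec]
  constructor
  · ext i j; simp [conjTranspose_apply, vecMulVec_apply, mul_comm]
  · intro x
    rw [aux_vecMulVec_mulVec]
    simp only [star_trivial, dotProduct_smul, smul_eq_mul]
    rw [dotProduct_comm]
    exact mul_self_nonneg _

lemma aux_smul_posSemidef {A : Matrix κ κ ℝ} (hA : A.PosSemidef) {r : ℝ} (hr : 0 ≤ r) :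
    (r • A).PosSemidef := by
  rw [posSemidef_iff_dotProduct_mulVec]
  constructor
  · have h1 := hA.1
    unfold IsHermitian at *
    ext i j
    simp only [conjTranspose_apply, Matrix.smul_apply, star_trivial, smul_eq_mul]
    rw [← congrFun (congrFun h1 i) j]
    simp [conjTranspose_apply]
  · intro x
    rw [smul_mulVec, dotProduct_smul, smul_eq_mul]
    exact mul_nonneg hr (hA.dotProduct_mulVec_nonneg x)

lemma aux_infoMat_posSemidef {S ι : Type*} [Fintype ι] (g : S → κ → ℝ) (pts : ι → S)
    (w : ι → ℝ) (hw : ∀ i, 0 ≤ w i) : (infoMat g pts w).PosSemidef := by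
  unfold infoMat
  refine Finset.sum_induction _ _ (fun A B hA hB => hA.add hB) Matrix.PosSemidef.zero
    fun i _ => aux_smul_posSemidef (aux_vecMulVec_posSemidef _) (hw i)

lemma aux_infoMat_transpose {S ι : Type*} [Fintype ι] (g : S → κ → ℝ) (pts : ι → S)
    (w : ι → ℝ) (hw : ∀ i, 0 ≤ w i) : (infoMat g pts w)ᵀ = infoMat g pts w := by
  have h := (aux_infoMat_posSemidef g pts w hw).1
  ext i j
  have := congrFun (congrFun h j) i
  simpa [conjTranspose_apply] using this.symm

lemma aux_dot_symm {M : Matrix κ κ ℝ} (hM : Mᵀ = M) (a b : κ → ℝ) :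
    a ⬝ᵥ M *ᵥ b = b ⬝ᵥ M *ᵥ a := by
  rw [dotProduct_mulVec, ← mulVec_transpose, hM, dotProduct_comm]

lemma aux_cs {M : Matrix κ κ ℝ} (hM : M.PosSemidef) (a b : κ → ℝ) :
    (a ⬝ᵥ M *ᵥ b) ^ 2 ≤ (a ⬝ᵥ M *ᵥ a) * (b ⬝ᵥ M *ᵥ b) := by
  have hsymm : Mᵀ = M := by
    have h := hM.1
    ext i j
    have := congrFun (congrFun h j) i
    simpa [conjTranspose_apply] using this.symm
  have key : ∀ t : ℝ, 0 ≤ (a ⬝ᵥ M *ᵥ a) * (t * t) + (2 * (a ⬝ᵥ M *ᵥ b)) * t + b ⬝ᵥ M *ᵥ b := by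
    intro t
    have h := hM.dotProduct_mulVec_nonneg (t • a + b)
    simp only [star_trivial, mulVec_add, mulVec_smul, dotProduct_add, add_dotProduct,
      smul_dotProduct, dotProduct_smul, smul_eq_mul] at h
    rw [aux_dot_symm hsymm b a] at h
    nlinarith [h]
  have hd := discrim_le_zero key
  unfold discrim at hd
  nlinarith [hd]

end Aux

lemma aux_dot_sum {κ : Type*} [Fintype κ] {S ι : Type*} [Fintype ι] (g : S → κ → ℝ)
    (pts : ι → S) (w : ι → ℝ) (a : κ → ℝ) :
    a ⬝ᵥ (∑ i, w i • vecMulVec (g (pts i)) (g (pts i))) *ᵥ a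
      = ∑ i, w i * (a ⬝ᵥ g (pts i)) ^ 2 := by
  simp only [dotProduct, mulVec, Matrix.sum_apply, Matrix.smul_apply, vecMulVec_apply, smul_eq_mul,
    Finset.sum_mul, Finset.mul_sum]
  have hswap : ∀ x : κ, ∑ x1 : κ, ∑ i : ι, a x * (w i * (g (pts i) x * g (pts i) x1) * a x1)
      = ∑ i : ι, ∑ x1 : κ, a x * (w i * (g (pts i) x * g (pts i) x1) * a x1) :=
    fun x => Finset.sum_comm
  rw [Finset.sum_congr rfl fun x _ => hswap x, Finset.sum_comm]
  refine Finset.sum_congr rfl fun i _ => ?_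
  rw [sq, Finset.sum_mul_sum, Finset.mul_sum]
  refine Finset.sum_congr rfl fun q _ => ?_
  rw [Finset.mul_sum]
  refine Finset.sum_congr rfl fun r _ => ?_
  ring

lemma aux_eqthm {S : Type*} {p m : ℕ} (g : S → Fin p → ℝ) (pts : Fin m → S) (w : Fin m → ℝ)
    (hw : ∀ i, 0 < w i) (hw1 : ∑ i, w i = 1) (hdet : IsUnit (infoMat g pts w).det)
    (c : Fin p → ℝ)
    (hopt : ∀ {m' : ℕ} (pts' : Fin m' → S) (w' : Fin m' → ℝ),
      (∀ i, 0 < w' i) → ∑ i, w' i = 1 → IsUnit (infoMat g pts' w').det →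
      c ⬝ᵥ (infoMat g pts w)⁻¹ *ᵥ c ≤ c ⬝ᵥ (infoMat g pts' w')⁻¹ *ᵥ c)
    (x : S) :
    (g x ⬝ᵥ (infoMat g pts w)⁻¹ *ᵥ c) ^ 2 ≤ c ⬝ᵥ (infoMat g pts w)⁻¹ *ᵥ c := by
  have hMpsd := aux_infoMat_posSemidef g pts w (fun i => (hw i).le)
  have hMsymm := aux_infoMat_transpose g pts w (fun i => (hw i).le)
  set M : Matrix (Fin p) (Fin p) ℝ := infoMat g pts w with hMdef
  have hMipsd : M⁻¹.PosSemidef := hMpsd.inv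
  have hMisymm : M⁻¹ᵀ = M⁻¹ := by rw [transpose_nonsing_inv, hMsymm]
  set g0 : Fin p → ℝ := g x with hg0
  set u : ℝ := g0 ⬝ᵥ M⁻¹ *ᵥ g0 with hu_def
  set s : ℝ := g0 ⬝ᵥ M⁻¹ *ᵥ c with hs_def
  set v : ℝ := c ⬝ᵥ M⁻¹ *ᵥ c with hv_def
  have hu : 0 ≤ u := by simpa using hMipsd.dotProduct_mulVec_nonneg g0
  have hv : 0 ≤ v := by simpa using hMipsd.dotProduct_mulVec_nonneg c
  have key : ∀ α : ℝ, 0 < α → α < 1 → s ^ 2 ≤ (1 - α + α * u) * v := by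
    intro α hα0 hα1
    have h1α : (0:ℝ) < 1 - α := by linarith
    have hden : 0 < 1 - α + α * u := by nlinarith
    have hs₀ : 0 < (1 - α) * (1 - α + α * u) := mul_pos h1α hden
    set w' : Fin (m+1) → ℝ := Fin.snoc (fun i => (1 - α) * w i) α with hw'def
    set pts' : Fin (m+1) → S := Fin.snoc pts x with hpts'def
    have hw' : ∀ i, 0 < w' i := by
      intro i
      refine Fin.lastCases ?_ (fun j => ?_) i
      · simpa [hw'def] using hα0
      · simpa [hw'def] using mul_pos h1α (hw j)
    have hw'1 : ∑ i, w' i = 1 := by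
      rw [Fin.sum_univ_castSucc]
      simp [hw'def, ← Finset.mul_sum, hw1]
    have hMα : infoMat g pts' w' = (1 - α) • M + α • vecMulVec g0 g0 := by
      show infoMat g pts' w' = (1 - α) • infoMat g pts w + α • vecMulVec g0 g0
      unfold infoMat
      rw [Fin.sum_univ_castSucc]
      simp only [hpts'def, hw'def, Fin.snoc_castSucc, Fin.snoc_last, hg0]
      rw [Finset.smul_sum]
      congr 1
      exact Finset.sum_congr rfl fun i _ => (smul_smul _ _ _).symm
    set w0 : Fin p → ℝ := M⁻¹ *ᵥ g0 with hw0
    set G := vecMulVec g0 g0 with hG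
    set W := vecMulVec w0 w0 with hW
    set V := vecMulVec g0 w0 with hV
    have hMMi : M * M⁻¹ = 1 := mul_nonsing_inv M hdet
    have e2 : M * W = V := by
      rw [hW, aux_mul_vecMulVec, hw0, mulVec_mulVec, hMMi, one_mulVec, ← hV]
    have e3 : G * M⁻¹ = V := by
      rw [hG, aux_vecMulVec_mul, ← mulVec_transpose, hMisymm, ← hw0, ← hV]
    have e4 : G * W = u • V := by
      rw [hG, hW, aux_vecMulVec_mul_vecMulVec, ← hV, hw0, hu_def]
    set P := (1 - α + α * u) • M⁻¹ - α • W with hP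
    have hMP : ((1 - α) • M + α • G) * P = ((1 - α) * (1 - α + α * u)) • (1 : Matrix (Fin p) (Fin p) ℝ) := by
      rw [hP]
      simp only [add_mul, mul_sub, Matrix.smul_mul, Matrix.mul_smul, hMMi, e2, e3, e4,
        smul_smul]
      module
    have hrinv : (infoMat g pts' w') * (((1 - α) * (1 - α + α * u))⁻¹ • P) = 1 := by
      rw [hMα, Matrix.mul_smul, hMP, smul_smul, inv_mul_cancel₀ hs₀.ne', one_smul]
    have hdet' : IsUnit (infoMat g pts' w').det := isUnit_det_of_right_inverse hrinv
    have hinv : (infoMat g pts' w')⁻¹ = ((1 - α) * (1 - α + α * u))⁻¹ • P :=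
      inv_eq_right_inv hrinv
    have hle := hopt pts' w' hw' hw'1 hdet'
    rw [hinv] at hle
    have hWc : c ⬝ᵥ W *ᵥ c = s ^ 2 := by
      rw [hW, aux_vecMulVec_mulVec, dotProduct_smul, smul_eq_mul]
      have h1 : w0 ⬝ᵥ c = s := by
        rw [hw0, dotProduct_comm, hs_def, aux_dot_symm hMisymm c g0]
      have h2 : c ⬝ᵥ w0 = s := by
        rw [hw0, hs_def, aux_dot_symm hMisymm c g0]
      rw [h1, h2, sq]
    have hval : c ⬝ᵥ (((1 - α) * (1 - α + α * u))⁻¹ • P) *ᵥ c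
        = ((1 - α) * (1 - α + α * u))⁻¹ * ((1 - α + α * u) * v - α * s ^ 2) := by
      rw [smul_mulVec, dotProduct_smul, smul_eq_mul, hP, sub_mulVec,
        smul_mulVec, smul_mulVec, dotProduct_sub, dotProduct_smul,
        dotProduct_smul, smul_eq_mul, smul_eq_mul, hWc, ← hv_def]
    rw [hval] at hle
    have hX : ((1 - α) * (1 - α + α * u)) * (((1 - α) * (1 - α + α * u))⁻¹ *
        ((1 - α + α * u) * v - α * s ^ 2)) = (1 - α + α * u) * v - α * s ^ 2 := by
      rw [← mul_assoc, mul_inv_cancel₀ hs₀.ne', one_mul]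
    have h2 : ((1 - α) * (1 - α + α * u)) * v ≤ (1 - α + α * u) * v - α * s ^ 2 :=
      (mul_le_mul_of_nonneg_left hle hs₀.le).trans_eq hX
    nlinarith [h2, mul_pos hα0 hden]
  rcases le_or_gt ((u - 1) * v) 0 with hcase | hcase
  · have h := key (1/2) (by norm_num) (by norm_num)
    nlinarith [h, hcase]
  · by_contra hlt
    push_neg at hlt
    set α : ℝ := min (1/2) ((s ^ 2 - v) / (2 * ((u - 1) * v))) with hα
    have hαpos : 0 < α :=
      lt_min (by norm_num) (div_pos (by linarith) (by linarith))
    have hα1 : α < 1 := lt_of_le_of_lt (min_le_left _ _) (by norm_num)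
    have h := key α hαpos hα1
    have hb : α * ((u - 1) * v) ≤ (s ^ 2 - v) / 2 := by
      have hle' : α ≤ (s ^ 2 - v) / (2 * ((u - 1) * v)) := min_le_right _ _
      calc α * ((u - 1) * v) ≤ ((s ^ 2 - v) / (2 * ((u - 1) * v))) * ((u - 1) * v) :=
            mul_le_mul_of_nonneg_right hle' hcase.le
        _ = (s ^ 2 - v) / 2 := by
            rw [div_mul_eq_mul_div, mul_div_mul_right _ _ hcase.ne']
    nlinarith [h, hb]

lemma aux_infoMat_kron {𝒳 𝒯 : Type*} {p₁ p₂ : ℕ} (g₁ : 𝒳 → Fin p₁ → ℝ) (g₂ : 𝒯 → Fin p₂ → ℝ)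
    {m l : ℕ} (xs : Fin m → 𝒳) (ws : Fin m → ℝ) (ts : Fin l → 𝒯) (ps : Fin l → ℝ) :
    infoMat (fun (z : 𝒳 × 𝒯) (q : Fin p₁ × Fin p₂) => g₁ z.1 q.1 * g₂ z.2 q.2)
        (fun ij : Fin m × Fin l => (xs ij.1, ts ij.2))
        (fun ij : Fin m × Fin l => ws ij.1 * ps ij.2)
      = (infoMat g₁ xs ws) ⊗ₖ (infoMat g₂ ts ps) := by
  ext q r
  simp only [infoMat, Matrix.sum_apply, Matrix.smul_apply, vecMulVec_apply, smul_eq_mul,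
    kroneckerMap_apply, Fintype.sum_prod_type]
  rw [Finset.sum_mul_sum]
  refine Finset.sum_congr rfl fun i _ => Finset.sum_congr rfl fun j _ => by ring

lemma aux_kron_mulVec {p₁ p₂ : ℕ} (A : Matrix (Fin p₁) (Fin p₁) ℝ)
    (B : Matrix (Fin p₂) (Fin p₂) ℝ) (b₁ : Fin p₁ → ℝ) (b₂ : Fin p₂ → ℝ) :
    ((A ⊗ₖ B) *ᵥ fun q : Fin p₁ × Fin p₂ => b₁ q.1 * b₂ q.2)
      = fun q : Fin p₁ × Fin p₂ => (A *ᵥ b₁) q.1 * (B *ᵥ b₂) q.2 := by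
  ext q
  simp only [mulVec, dotProduct, kroneckerMap_apply, Fintype.sum_prod_type]
  rw [Finset.sum_mul_sum]
  refine Finset.sum_congr rfl fun i _ => Finset.sum_congr rfl fun j _ => by ring

lemma aux_dot_prodvec {p₁ p₂ : ℕ} (a₁ b₁ : Fin p₁ → ℝ) (a₂ b₂ : Fin p₂ → ℝ) :
    (fun q : Fin p₁ × Fin p₂ => a₁ q.1 * a₂ q.2) ⬝ᵥ (fun q : Fin p₁ × Fin p₂ => b₁ q.1 * b₂ q.2)
      = (a₁ ⬝ᵥ b₁) * (a₂ ⬝ᵥ b₂) := by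
  simp only [dotProduct, Fintype.sum_prod_type]
  rw [Finset.sum_mul_sum]
  refine Finset.sum_congr rfl fun i _ => Finset.sum_congr rfl fun j _ => by ring

lemma aux_dot_kron {p₁ p₂ : ℕ} (A : Matrix (Fin p₁) (Fin p₁) ℝ) (B : Matrix (Fin p₂) (Fin p₂) ℝ)
    (a₁ b₁ : Fin p₁ → ℝ) (a₂ b₂ : Fin p₂ → ℝ) :
    (fun q : Fin p₁ × Fin p₂ => a₁ q.1 * a₂ q.2) ⬝ᵥ (A ⊗ₖ B) *ᵥ
        (fun q : Fin p₁ × Fin p₂ => b₁ q.1 * b₂ q.2)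
      = (a₁ ⬝ᵥ A *ᵥ b₁) * (a₂ ⬝ᵥ B *ᵥ b₂) := by
  rw [aux_kron_mulVec, aux_dot_prodvec]


/-- **Theorem 1.** If `ξ*` is `c`-optimal for `c₁` in the marginal model `g₁` on `𝒳` and
`τ*` is `c`-optimal for `c₂` in the marginal model `g₂` on `𝒯`, then the product design
`ζ* = ξ* ⊗ τ*` is `c`-optimal for `c₁ ⊗ c₂` in the product-type model
`g(x,t) = g₁(x) ⊗ g₂(t)` on `𝒳 × 𝒯` among all approximate designs with invertible
information matrix, and the optimal value factorizes:
`(c₁ ⊗ c₂)ᵀ M(ζ*)⁻¹ (c₁ ⊗ c₂) = (c₁ᵀ M₁(ξ*)⁻¹ c₁)(c₂ᵀ M₂(τ*)⁻¹ c₂)`. -/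
theorem stmt11 {𝒳 𝒯 : Type*} {p₁ p₂ : ℕ}
    (g₁ : 𝒳 → Fin p₁ → ℝ) (g₂ : 𝒯 → Fin p₂ → ℝ)
    (c₁ : Fin p₁ → ℝ) (hc₁ : c₁ ≠ 0) (c₂ : Fin p₂ → ℝ) (hc₂ : c₂ ≠ 0)
    {m : ℕ} (xs : Fin m → 𝒳) (ws : Fin m → ℝ)
    (hws : ∀ i, 0 < ws i) (hws1 : ∑ i, ws i = 1)
    (hξdet : IsUnit (infoMat g₁ xs ws).det)
    (hξopt : ∀ {m' : ℕ} (xs' : Fin m' → 𝒳) (ws' : Fin m' → ℝ),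
      (∀ i, 0 < ws' i) → ∑ i, ws' i = 1 → IsUnit (infoMat g₁ xs' ws').det →
      c₁ ⬝ᵥ (infoMat g₁ xs ws)⁻¹ *ᵥ c₁ ≤ c₁ ⬝ᵥ (infoMat g₁ xs' ws')⁻¹ *ᵥ c₁)
    {l : ℕ} (ts : Fin l → 𝒯) (ps : Fin l → ℝ)
    (hps : ∀ j, 0 < ps j) (hps1 : ∑ j, ps j = 1)
    (hτdet : IsUnit (infoMat g₂ ts ps).det)
    (hτopt : ∀ {l' : ℕ} (ts' : Fin l' → 𝒯) (ps' : Fin l' → ℝ),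
      (∀ j, 0 < ps' j) → ∑ j, ps' j = 1 → IsUnit (infoMat g₂ ts' ps').det →
      c₂ ⬝ᵥ (infoMat g₂ ts ps)⁻¹ *ᵥ c₂ ≤ c₂ ⬝ᵥ (infoMat g₂ ts' ps')⁻¹ *ᵥ c₂) :
    IsUnit (infoMat (fun (z : 𝒳 × 𝒯) (q : Fin p₁ × Fin p₂) => g₁ z.1 q.1 * g₂ z.2 q.2)
        (fun ij : Fin m × Fin l => (xs ij.1, ts ij.2))
        (fun ij : Fin m × Fin l => ws ij.1 * ps ij.2)).det ∧
    (∀ {ν : ℕ} (zs : Fin ν → 𝒳 × 𝒯) (ηs : Fin ν → ℝ),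
      (∀ i, 0 < ηs i) → ∑ i, ηs i = 1 →
      IsUnit (infoMat (fun (z : 𝒳 × 𝒯) (q : Fin p₁ × Fin p₂) => g₁ z.1 q.1 * g₂ z.2 q.2)
        zs ηs).det →
      (fun q : Fin p₁ × Fin p₂ => c₁ q.1 * c₂ q.2) ⬝ᵥ
          (infoMat (fun (z : 𝒳 × 𝒯) (q : Fin p₁ × Fin p₂) => g₁ z.1 q.1 * g₂ z.2 q.2)
            (fun ij : Fin m × Fin l => (xs ij.1, ts ij.2))
            (fun ij : Fin m × Fin l => ws ij.1 * ps ij.2))⁻¹ *ᵥ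
          (fun q : Fin p₁ × Fin p₂ => c₁ q.1 * c₂ q.2) ≤
      (fun q : Fin p₁ × Fin p₂ => c₁ q.1 * c₂ q.2) ⬝ᵥ
          (infoMat (fun (z : 𝒳 × 𝒯) (q : Fin p₁ × Fin p₂) => g₁ z.1 q.1 * g₂ z.2 q.2)
            zs ηs)⁻¹ *ᵥ
          (fun q : Fin p₁ × Fin p₂ => c₁ q.1 * c₂ q.2)) ∧
    (fun q : Fin p₁ × Fin p₂ => c₁ q.1 * c₂ q.2) ⬝ᵥ
        (infoMat (fun (z : 𝒳 × 𝒯) (q : Fin p₁ × Fin p₂) => g₁ z.1 q.1 * g₂ z.2 q.2)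
          (fun ij : Fin m × Fin l => (xs ij.1, ts ij.2))
          (fun ij : Fin m × Fin l => ws ij.1 * ps ij.2))⁻¹ *ᵥ
        (fun q : Fin p₁ × Fin p₂ => c₁ q.1 * c₂ q.2) =
      (c₁ ⬝ᵥ (infoMat g₁ xs ws)⁻¹ *ᵥ c₁) * (c₂ ⬝ᵥ (infoMat g₂ ts ps)⁻¹ *ᵥ c₂) := by
  have hkron := aux_infoMat_kron g₁ g₂ xs ws ts ps
  set M₁ := infoMat g₁ xs ws with hM₁
  set M₂ := infoMat g₂ ts ps with hM₂
  have hM₁psd := aux_infoMat_posSemidef g₁ xs ws fun i => (hws i).le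
  have hM₂psd := aux_infoMat_posSemidef g₂ ts ps fun j => (hps j).le
  have hM₁ipsd : M₁⁻¹.PosSemidef := hM₁psd.inv
  have hM₂ipsd : M₂⁻¹.PosSemidef := hM₂psd.inv
  set v₁ := c₁ ⬝ᵥ M₁⁻¹ *ᵥ c₁ with hv₁
  set v₂ := c₂ ⬝ᵥ M₂⁻¹ *ᵥ c₂ with hv₂
  have hv₁pos : 0 < v₁ := by
    rcases lt_or_eq_of_le (by simpa using hM₁ipsd.dotProduct_mulVec_nonneg c₁) with h | h
    · exact h
    · exfalso
      have h0 : M₁⁻¹ *ᵥ c₁ = 0 := by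
        have := (hM₁ipsd.dotProduct_mulVec_zero_iff c₁).mp (by simpa using h.symm)
        simpa using this
      have hc : M₁ *ᵥ (M₁⁻¹ *ᵥ c₁) = c₁ := by
        rw [mulVec_mulVec, mul_nonsing_inv _ hξdet, one_mulVec]
      rw [h0, mulVec_zero] at hc
      exact hc₁ hc.symm
  have hv₂pos : 0 < v₂ := by
    rcases lt_or_eq_of_le (by simpa using hM₂ipsd.dotProduct_mulVec_nonneg c₂) with h | h
    · exact h
    · exfalso
      have h0 : M₂⁻¹ *ᵥ c₂ = 0 := by
        have := (hM₂ipsd.dotProduct_mulVec_zero_iff c₂).mp (by simpa using h.symm)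
        simpa using this
      have hc : M₂ *ᵥ (M₂⁻¹ *ᵥ c₂) = c₂ := by
        rw [mulVec_mulVec, mul_nonsing_inv _ hτdet, one_mulVec]
      rw [h0, mulVec_zero] at hc
      exact hc₂ hc.symm
  have heq : (fun q : Fin p₁ × Fin p₂ => c₁ q.1 * c₂ q.2) ⬝ᵥ
      (infoMat (fun (z : 𝒳 × 𝒯) (q : Fin p₁ × Fin p₂) => g₁ z.1 q.1 * g₂ z.2 q.2)
        (fun ij : Fin m × Fin l => (xs ij.1, ts ij.2))
        (fun ij : Fin m × Fin l => ws ij.1 * ps ij.2))⁻¹ *ᵥ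
      (fun q : Fin p₁ × Fin p₂ => c₁ q.1 * c₂ q.2) = v₁ * v₂ := by
    rw [hkron, inv_kronecker, aux_dot_kron]
  refine ⟨?_, ?_, heq⟩
  · rw [hkron, det_kronecker]
    exact (hξdet.pow _).mul (hτdet.pow _)
  · intro ν zs ηs hηs hηs1 hNdet
    rw [heq]
    set gp := fun (z : 𝒳 × 𝒯) (q : Fin p₁ × Fin p₂) => g₁ z.1 q.1 * g₂ z.2 q.2 with hgp
    set N := infoMat gp zs ηs with hN
    have hNpsd := aux_infoMat_posSemidef gp zs ηs fun i => (hηs i).le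
    have hNipsd : N⁻¹.PosSemidef := hNpsd.inv
    set d₁ := M₁⁻¹ *ᵥ c₁ with hd₁
    set d₂ := M₂⁻¹ *ᵥ c₂ with hd₂
    set d := fun q : Fin p₁ × Fin p₂ => d₁ q.1 * d₂ q.2 with hd
    set cc := fun q : Fin p₁ × Fin p₂ => c₁ q.1 * c₂ q.2 with hcc
    have hdc : d ⬝ᵥ cc = v₁ * v₂ := by
      rw [hd, hcc, aux_dot_prodvec, hd₁, hd₂, dotProduct_comm d₁ c₁, dotProduct_comm d₂ c₂]
    have hdNd : d ⬝ᵥ N *ᵥ d ≤ v₁ * v₂ := by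
      have hsum : d ⬝ᵥ N *ᵥ d = ∑ i, ηs i * (d ⬝ᵥ gp (zs i)) ^ 2 :=
        aux_dot_sum gp zs ηs d
      rw [hsum]
      calc ∑ i, ηs i * (d ⬝ᵥ gp (zs i)) ^ 2 ≤ ∑ i, ηs i * (v₁ * v₂) := by
            refine Finset.sum_le_sum fun i _ => ?_
            refine mul_le_mul_of_nonneg_left ?_ (hηs i).le
            have hfac : d ⬝ᵥ gp (zs i) = (d₁ ⬝ᵥ g₁ (zs i).1) * (d₂ ⬝ᵥ g₂ (zs i).2) := by
              rw [hd, hgp]; exact aux_dot_prodvec d₁ (g₁ (zs i).1) d₂ (g₂ (zs i).2)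
            have hb₁ : (d₁ ⬝ᵥ g₁ (zs i).1) ^ 2 ≤ v₁ := by
              rw [hd₁, dotProduct_comm]
              exact aux_eqthm g₁ xs ws hws hws1 hξdet c₁ hξopt (zs i).1
            have hb₂ : (d₂ ⬝ᵥ g₂ (zs i).2) ^ 2 ≤ v₂ := by
              rw [hd₂, dotProduct_comm]
              exact aux_eqthm g₂ ts ps hps hps1 hτdet c₂ hτopt (zs i).2
            rw [hfac, mul_pow]
            exact mul_le_mul hb₁ hb₂ (sq_nonneg _) hv₁pos.le
        _ = v₁ * v₂ := by rw [← Finset.sum_mul, hηs1, one_mul]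
    have hcs := aux_cs hNpsd d (N⁻¹ *ᵥ cc)
    have hNc : N *ᵥ (N⁻¹ *ᵥ cc) = cc := by
      rw [mulVec_mulVec, mul_nonsing_inv _ hNdet, one_mulVec]
    rw [hNc, dotProduct_comm (N⁻¹ *ᵥ cc) cc, hdc, ← hN] at hcs
    have hqnn : 0 ≤ cc ⬝ᵥ N⁻¹ *ᵥ cc := by simpa using hNipsd.dotProduct_mulVec_nonneg cc
    nlinarith [hcs, hdNd, mul_pos hv₁pos hv₂pos, hqnn]
end

section
/- Consider simple linear regression f(x) = (1, x)ᵀ on the design region 𝒳 = [0, 1] and a use condition x_u < 0. The two-point design ξ* which assigns weight w* = |x_u|/(1 + 2|x_u|) to x = 1 and weight 1 − w* = (1 + |x_u|)/(1 + 2|x_u|) to x = 0 has invertible information matrix and attains f(x_u)ᵀ M(ξ*)⁻¹ f(x_u) = (1 + 2|x_u|)²; moreover, for every approximate design ξ on [0, 1] with invertible information matrix M(ξ), f(x_u)ᵀ M(ξ)⁻¹ f(x_u) ≥ (1 + 2|x_u|)². Hence ξ* is c-optimal for extrapolation of the mean response at x_u. -/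
open Matrix

/-- The information matrix `M(ξ) = Σᵢ wᵢ f(xᵢ) f(xᵢ)ᵀ` of an approximate design on `[0,1]`
for the simple linear regression `f(x) = (1, x)ᵀ`. -/
noncomputable def infoM {m : ℕ} (x : Fin m → ℝ) (w : Fin m → ℝ) :
    Matrix (Fin 2) (Fin 2) ℝ :=
  ∑ i, w i • vecMulVec ![1, x i] ![1, x i]

lemma infoM_eq {m : ℕ} (x w : Fin m → ℝ) :
    infoM x w = !![∑ i, w i, ∑ i, w i * x i; ∑ i, w i * x i, ∑ i, w i * x i ^ 2] := by
  ext i j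
  fin_cases i <;> fin_cases j <;>
    simp [infoM, Matrix.sum_apply, vecMulVec_apply, sq, mul_assoc]

lemma quad (p s q xu : ℝ) (h : p * q - s * s ≠ 0) :
    ![1, xu] ⬝ᵥ (!![p, s; s, q])⁻¹ *ᵥ ![1, xu]
      = (q - 2 * s * xu + p * xu ^ 2) / (p * q - s * s) := by
  rw [Matrix.inv_def]
  simp [Matrix.adjugate_fin_two, Matrix.det_fin_two, Ring.inverse_eq_inv',
    dotProduct, mulVec, Fin.sum_univ_two]
  field_simp
  ring

/-- For simple linear regression on `[0,1]` and a use condition `x_u < 0`, the two-point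
design with weight `w* = |x_u|/(1+2|x_u|)` at `x = 1` and `1 − w*` at `x = 0` has invertible
information matrix, attains the `c`-criterion value `(1+2|x_u|)²` for extrapolation at `x_u`,
and every approximate design with invertible information matrix has criterion value at least
`(1+2|x_u|)²`; hence this design is `c`-optimal for extrapolation at `x_u`. -/
theorem stmt12 (xu : ℝ) (hxu : xu < 0) :
    IsUnit (infoM ![0, 1] ![(1 + |xu|) / (1 + 2 * |xu|), |xu| / (1 + 2 * |xu|)]).det ∧
    ![1, xu] ⬝ᵥ (infoM ![0, 1] ![(1 + |xu|) / (1 + 2 * |xu|), |xu| / (1 + 2 * |xu|)])⁻¹ *ᵥ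
        ![1, xu] = (1 + 2 * |xu|) ^ 2 ∧
    ∀ {m : ℕ} (x : Fin m → ℝ) (w : Fin m → ℝ),
      (∀ i, x i ∈ Set.Icc (0 : ℝ) 1) → (∀ i, 0 < w i) → ∑ i, w i = 1 →
      IsUnit (infoM x w).det →
      (1 + 2 * |xu|) ^ 2 ≤ ![1, xu] ⬝ᵥ (infoM x w)⁻¹ *ᵥ ![1, xu] := by
  set t := |xu| with ht
  have ht0 : 0 < t := abs_pos.2 hxu.ne
  have htt : xu = -t := by rw [ht, abs_of_neg hxu]; ring
  have hd : (0:ℝ) < 1 + 2 * t := by linarith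
  -- the two-point design
  have hM : infoM ![0, 1] ![(1 + t) / (1 + 2 * t), t / (1 + 2 * t)]
      = !![1, t / (1 + 2 * t); t / (1 + 2 * t), t / (1 + 2 * t)] := by
    rw [infoM_eq]
    norm_num [Fin.sum_univ_two]
    rw [← add_div, show (1:ℝ) + t + t = 1 + 2 * t from by ring, div_self hd.ne']
  set b := t / (1 + 2 * t) with hb
  have hb0 : 0 < b := div_pos ht0 hd
  have hb1 : b < 1 := by
    rw [hb, div_lt_one hd]; linarith
  have hdet : (infoM ![0, 1] ![(1 + t) / (1 + 2 * t), t / (1 + 2 * t)]).det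
      = 1 * b - b * b := by
    rw [hM, Matrix.det_fin_two_of]
  have hdetne : 1 * b - b * b ≠ 0 := by nlinarith
  refine ⟨?_, ?_, ?_⟩
  · rw [hdet]; exact isUnit_iff_ne_zero.2 hdetne
  · rw [hM, quad _ _ _ _ hdetne, htt]
    rw [div_eq_iff hdetne, hb]
    field_simp
    ring
  · intro m x w hx hw hsum hunit
    set s := ∑ i, w i * x i with hs
    set q := ∑ i, w i * x i ^ 2 with hq
    have hM2 : infoM x w = !![1, s; s, q] := by rw [infoM_eq, hsum]
    have hdet2 : (infoM x w).det = 1 * q - s * s := by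
      rw [hM2, Matrix.det_fin_two_of]
    have hne : 1 * q - s * s ≠ 0 := fun h => by
      rw [hdet2, h] at hunit; simpa using hunit
    -- Cauchy-Schwarz: s^2 ≤ q
    have hcs : s ^ 2 ≤ q := by
      have := Finset.sum_sq_le_sum_mul_sum_of_sq_eq_mul Finset.univ
        (r := fun i => w i * x i) (f := w) (g := fun i => w i * x i ^ 2)
        (fun i _ => (hw i).le)
        (fun i _ => mul_nonneg (hw i).le (sq_nonneg _))
        (fun i _ => by ring)
      simpa [hsum, hs, hq] using this
    have hdpos : 0 < q - s * s := by
      rcases lt_or_eq_of_le (by nlinarith : s * s ≤ q) with h | h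
      · linarith
      · exact absurd (by linarith) hne
    -- q ≤ s ≤ 1
    have hqs : q ≤ s := by
      apply Finset.sum_le_sum
      intro i _
      have h1 := (hx i).1; have h2 := (hx i).2
      nlinarith [mul_nonneg (hw i).le (mul_nonneg h1 (sub_nonneg.2 h2))]
    have hs1 : s ≤ 1 := by
      rw [← hsum]
      apply Finset.sum_le_sum
      intro i _
      nlinarith [(hw i).le, (hx i).1, (hx i).2]
    rw [hM2, quad _ _ _ _ hne, htt]
    rw [le_div_iff₀ (by linarith)]
    nlinarith [sq_nonneg ((1 + 2*t) * s - t), mul_nonneg (by nlinarith : (0:ℝ) ≤ 4*t + 4*t^2) (by linarith : (0:ℝ) ≤ s - q)]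
end

section
/- Consider simple linear regression f(x) = (1, x)ᵀ on [0,1], a use condition x_u ≤ 0, and for m ≥ 2 the uniform design ξ̄_m assigning equal weight 1/m to each of the m equally spaced points 0, 1/(m−1), 2/(m−1), …, 1. Then the information matrix M(ξ̄_m) is invertible and the c-criterion for extrapolation at x_u equals Φ_c(ξ̄_m) = f(x_u)ᵀ M(ξ̄_m)⁻¹ f(x_u) = 1 + a_m (1 + 2|x_u|)², where a_m = 3(m−1)/(m+1). -/
open Matrix

/-- The information matrix of the uniform design `ξ̄_m` assigning weight `1/m` to each of
the `m` equally spaced points `0, 1/(m−1), …, 1` for simple linear regression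
`f(x) = (1, x)ᵀ` on `[0,1]`. -/
noncomputable def uniformInfoM (m : ℕ) : Matrix (Fin 2) (Fin 2) ℝ :=
  ∑ i : Fin m, ((m : ℝ)⁻¹) •
    vecMulVec ![1, (i : ℝ) / ((m : ℝ) - 1)] ![1, (i : ℝ) / ((m : ℝ) - 1)]



lemma sum1 (m : ℕ) : ∑ i : Fin m, (i : ℝ) = m * (m - 1) / 2 := by
  induction m with
  | zero => simp
  | succ n ih =>
    rw [Fin.sum_univ_castSucc]
    simp only [Fin.coe_castSucc, ih, Fin.val_last]
    push_cast; ring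

lemma sum2 (m : ℕ) : ∑ i : Fin m, (i : ℝ)^2 = m * (m - 1) * (2 * m - 1) / 6 := by
  induction m with
  | zero => simp
  | succ n ih =>
    rw [Fin.sum_univ_castSucc]
    simp only [Fin.coe_castSucc, ih, Fin.val_last]
    push_cast; ring

lemma infoM_eq_s15 (m : ℕ) (hm : 2 ≤ m) :
    uniformInfoM m = !![1, 1/2; 1/2, (2*(m:ℝ)-1)/(6*((m:ℝ)-1))] := by
  have h2 : (2:ℝ) ≤ m := by exact_mod_cast hm
  have hm0 : (m : ℝ) ≠ 0 := by positivity
  have hm1 : (m : ℝ) - 1 ≠ 0 := by nlinarith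
  ext a b
  fin_cases a <;> fin_cases b
  · simp [uniformInfoM, Matrix.sum_apply, vecMulVec_apply]
    field_simp
  · simp [uniformInfoM, Matrix.sum_apply, vecMulVec_apply, ← Finset.mul_sum,
      div_eq_mul_inv, ← Finset.sum_mul, sum1]
    field_simp
  · simp [uniformInfoM, Matrix.sum_apply, vecMulVec_apply, ← Finset.mul_sum,
      div_eq_mul_inv, ← Finset.sum_mul, sum1]
    field_simp
  · simp [uniformInfoM, Matrix.sum_apply, vecMulVec_apply, div_mul_div_comm,
      ← Finset.sum_div, ← Finset.mul_sum, ← Finset.sum_mul, ← sq]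
    simp only [div_pow, ← Finset.sum_div]
    rw [sum2]; field_simp


/-- For simple linear regression on `[0,1]`, a use condition `x_u ≤ 0` and `m ≥ 2`, the
uniform design on the equidistant `m`-point grid has invertible information matrix and
`c`-criterion value `Φ_c(ξ̄_m) = 1 + a_m (1 + 2|x_u|)²` for extrapolation at `x_u`, where
`a_m = 3(m−1)/(m+1)`. -/
theorem stmt15 (xu : ℝ) (hxu : xu ≤ 0) (m : ℕ) (hm : 2 ≤ m) :
    IsUnit (uniformInfoM m).det ∧
      ![1, xu] ⬝ᵥ (uniformInfoM m)⁻¹ *ᵥ ![1, xu] =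
        1 + (3 * ((m : ℝ) - 1) / ((m : ℝ) + 1)) * (1 + 2 * |xu|) ^ 2 := by
  have h2 : (2:ℝ) ≤ m := by exact_mod_cast hm
  have hm0 : (m : ℝ) ≠ 0 := by positivity
  have hm1 : (m : ℝ) - 1 ≠ 0 := by nlinarith
  have hm2 : (m : ℝ) + 1 ≠ 0 := by positivity
  rw [infoM_eq_s15 m hm]
  have hdet : (!![1, 1/2; 1/2, (2*(m:ℝ)-1)/(6*((m:ℝ)-1))]).det
      = ((m:ℝ)+1)/(12*((m:ℝ)-1)) := by
    rw [Matrix.det_fin_two_of]; field_simp; ring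
  have hdet0 : (!![1, 1/2; 1/2, (2*(m:ℝ)-1)/(6*((m:ℝ)-1))]).det ≠ 0 := by
    rw [hdet]; positivity
  refine ⟨isUnit_iff_ne_zero.mpr hdet0, ?_⟩
  rw [Matrix.inv_def, Matrix.adjugate_fin_two_of, hdet]
  have habs : |xu| = -xu := abs_of_nonpos hxu
  simp [Matrix.mulVec, dotProduct, Fin.sum_univ_two, Ring.inverse_eq_inv', habs]
  field_simp
  ring
end
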